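/- Let (α₀, α₁, α₂, α₃) be a rotation quadrangle with relative revolute axes r_{i,i+1}, and let u be a line meeting each axis r_{i,i+1} in a point P_{i,i+1}, the four points P₀₁, P₁₂, P₂₃, P₃₀ being pairwise distinct. Assume there exists a point X on u such that P₀₁ lies strictly between X and P₁₂, P₀₁ lies strictly between X and P₃₀, P₂₃ lies strictly between X and P₁₂, and P₂₃ lies strictly between X and P₃₀. Set U_{i,i+1} = α_i(P_{i,i+1}) (the vertices of the skew quadrilateral formed by the homologous images of u). Then dist(U₃₀, U₀₁) + dist(U₁₂, U₂₃) = dist(U₀₁, U₁₂) + dist(U₂₃, U₃₀); that is, both pairs of opposite edges in the skew quadrilateral (U₀₁, U₁₂, U₂₃, U₃₀) have the same sum of lengths (the classical criterion for the existence of a hyperboloid of revolution through the four lines α₀(u), α₁(u), α₂(u), α₃(u)). -/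

import Mathlib

noncomputable section

abbrev E : Type := EuclideanSpace ℝ (Fin 3)

/-- A line: a one-dimensional affine subspace. -/
def IsLine (s : AffineSubspace ℝ E) : Prop := Module.finrank ℝ s.direction = 1

/-- A plane: a two-dimensional affine subspace. -/
def IsPlane (s : AffineSubspace ℝ E) : Prop := Module.finrank ℝ s.direction = 2

/-- A set of points lies on a circle or a line: it is concyclic (contained in the
intersection of a sphere and a plane) or collinear. -/
def ConcyclicOrCollinear (s : Set E) : Prop :=
  EuclideanGeometry.Concyclic s ∨ Collinear ℝ s

/-- `τ` is a rotation with axis `r`: an isometry different from the identity whose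
linear part has determinant 1 and which fixes every point of the line `r`. -/
def IsRotation (τ : E ≃ᵃⁱ[ℝ] E) (r : AffineSubspace ℝ E) : Prop :=
  τ ≠ AffineIsometryEquiv.refl ℝ E ∧
  LinearMap.det (τ.linearIsometryEquiv.toLinearEquiv : E →ₗ[ℝ] E) = 1 ∧
  IsLine r ∧ ∀ x ∈ r, τ x = x

/-- `(α 0, α 1, α 2, α 3)` is a rotation quadrangle with relative revolute axes
`r i` (in the moving space): each relative displacement `τ_{i,i+1} = α (i+1) ∘ (α i)⁻¹`
is a rotation whose axis is the image `α i (r i)`. -/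
def IsRotationQuadrangle (α : Fin 4 → (E ≃ᵃⁱ[ℝ] E)) (r : Fin 4 → AffineSubspace ℝ E) : Prop :=
  ∀ i : Fin 4,
    IsRotation ((α i).symm.trans (α (i + 1)))
      ((r i).map (α i).toAffineIsometry.toAffineMap)

/-- In a rotation quadrangle, let `u` meet each axis `r i` in a point
`P i`, the four points being pairwise distinct, and suppose some `X ∈ u` is separated
from `P 1` and `P 3` by `P 0` as well as by `P 2`.  With `U i = α i (P i)` the vertices
of the skew quadrilateral formed by the homologous images of `u`, both pairs of
opposite edges have the same sum of lengths:
`dist (U 3) (U 0) + dist (U 1) (U 2) = dist (U 0) (U 1) + dist (U 2) (U 3)`. -/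
theorem opposite_edges_equal_sum
    (α : Fin 4 → (E ≃ᵃⁱ[ℝ] E)) (r : Fin 4 → AffineSubspace ℝ E)
    (hquad : IsRotationQuadrangle α r)
    (u : AffineSubspace ℝ E) (hu : IsLine u)
    (P : Fin 4 → E) (hPu : ∀ i, P i ∈ u) (hPr : ∀ i, P i ∈ r i)
    (hPdist : Function.Injective P)
    (X : E) (hXu : X ∈ u)
    (h01 : Sbtw ℝ X (P 0) (P 1)) (h03 : Sbtw ℝ X (P 0) (P 3))
    (h21 : Sbtw ℝ X (P 2) (P 1)) (h23 : Sbtw ℝ X (P 2) (P 3))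
    (U : Fin 4 → E) (hU : ∀ i, U i = α i (P i)) :
    dist (U 3) (U 0) + dist (U 1) (U 2) = dist (U 0) (U 1) + dist (U 2) (U 3) := by
  have hfix : ∀ i : Fin 4, α (i + 1) (P i) = α i (P i) := by
    intro i
    obtain ⟨-, -, -, hf⟩ := hquad i
    have := hf (α i (P i)) ⟨P i, hPr i, rfl⟩
    simpa using this
  have hd : ∀ i : Fin 4, dist (U i) (U (i + 1)) = dist (P i) (P (i + 1)) := by
    intro i
    rw [hU, hU, ← hfix i, (α (i + 1)).dist_map]
  have e0 := hd 0
  have e1 : dist (U 1) (U 2) = dist (P 1) (P 2) := hd 1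
  have e2 : dist (U 2) (U 3) = dist (P 2) (P 3) := hd 2
  have e3 : dist (U 3) (U 0) = dist (P 3) (P 0) := hd 3
  norm_num at e0 e1 e2
  have b01 := h01.wbtw.dist_add_dist
  have b03 := h03.wbtw.dist_add_dist
  have b21 := h21.wbtw.dist_add_dist
  have b23 := h23.wbtw.dist_add_dist
  rw [e0, e1, e3, dist_comm (P 1) (P 2), e2, dist_comm (P 3) (P 0),
    dist_comm (P 0) (P 3)]
  have c2 : dist (P 3) (P 0) = dist (P 0) (P 3) := dist_comm _ _
  linarith
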